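/- Let X = (X₁,…,Xₙ) be a random vector taking finitely many values in ℤⁿ. Then its Shannon entropy satisfies H(X) ≤ (n/2)·log₂[2πe·((1/n)·Σ_{i=1}^n Var(Xᵢ) + 1/12)], where Var(Xᵢ) = E(Xᵢ²) − (E Xᵢ)² and entropy is measured in bits. -/

import Mathlib

open Real Finset MeasureTheory intervalIntegral ProbabilityTheory

lemma var_nonneg_aux (T : Finset ℤ) (q : ℤ → ℝ) (hq0 : ∀ m, 0 ≤ q m)
    (hq1 : ∑ m ∈ T, q m = 1) :
    (∑ m ∈ T, q m * ((m : ℝ)) ^ 2) - (∑ m ∈ T, q m * (m : ℝ)) ^ 2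
      = ∑ m ∈ T, q m * ((m : ℝ) - ∑ k ∈ T, q k * (k : ℝ)) ^ 2 := by
  set μ := ∑ k ∈ T, q k * (k : ℝ) with hμ
  have : ∑ m ∈ T, q m * ((m : ℝ) - μ) ^ 2
      = ∑ m ∈ T, (q m * (m : ℝ) ^ 2 - 2 * μ * (q m * (m : ℝ)) + μ ^ 2 * q m) :=
    Finset.sum_congr rfl fun m _ => by ring
  rw [this, Finset.sum_add_distrib, Finset.sum_sub_distrib, ← Finset.mul_sum, ← Finset.mul_sum,
    hq1]
  ring

lemma onedim_entropy_le (T : Finset ℤ) (q : ℤ → ℝ) (hq0 : ∀ m, 0 ≤ q m)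
    (hq1 : ∑ m ∈ T, q m = 1) :
    -∑ m ∈ T, q m * Real.log (q m) ≤
      (1 / 2) * Real.log (2 * Real.pi * Real.exp 1 *
        (((∑ m ∈ T, q m * ((m : ℝ)) ^ 2) - (∑ m ∈ T, q m * (m : ℝ)) ^ 2) + 1 / 12)) := by
  set μ := ∑ k ∈ T, q k * (k : ℝ) with hμ
  set σ2 := (∑ m ∈ T, q m * ((m : ℝ)) ^ 2) - μ ^ 2 with hσ2
  have hσ2' : σ2 = ∑ m ∈ T, q m * ((m : ℝ) - μ) ^ 2 := var_nonneg_aux T q hq0 hq1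
  have hσ2nn : 0 ≤ σ2 := by
    rw [hσ2']
    exact Finset.sum_nonneg fun m _ => mul_nonneg (hq0 m) (sq_nonneg _)
  set v := σ2 + 1 / 12 with hv
  have hvpos : 0 < v := by positivity
  set c := μ + 1 / 2 with hc
  set g := gaussianPDFReal c v.toNNReal with hg
  have hvt : (v.toNNReal : ℝ) = v := Real.coe_toNNReal v hvpos.le
  have hvt0 : v.toNNReal ≠ 0 := by
    simp only [ne_eq, Real.toNNReal_eq_zero, not_le]
    exact hvpos
  have h2πv : (0:ℝ) < 2 * π * v := by positivity
  -- log of the gaussian pdf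
  have hlg : ∀ x : ℝ, Real.log (g x) = -Real.log (Real.sqrt (2 * π * v)) - (x - c) ^ 2 / (2 * v) := by
    intro x
    rw [hg, gaussianPDFReal, hvt]
    rw [Real.log_mul (by positivity) (Real.exp_ne_zero _), Real.log_inv, Real.log_exp]
    ring
  -- integral of (x-c)^2 over [m, m+1]
  have hI2 : ∀ m : ℤ, ∫ x in (m : ℝ)..((m : ℝ) + 1), (x - c) ^ 2
      = ((m : ℝ) - μ) ^ 2 + 1 / 12 := by
    intro m
    rw [intervalIntegral.integral_comp_sub_right (fun x => x ^ 2) c, integral_pow]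
    rw [hc]
    ring
  -- integral of log (g x) over [m, m+1]
  have hIlog : ∀ m : ℤ, ∫ x in (m : ℝ)..((m : ℝ) + 1), Real.log (g x)
      = -Real.log (Real.sqrt (2 * π * v)) - (((m : ℝ) - μ) ^ 2 + 1 / 12) / (2 * v) := by
    intro m
    rw [intervalIntegral.integral_congr (g := fun x =>
        -Real.log (Real.sqrt (2 * π * v)) - (x - c) ^ 2 / (2 * v))
      (fun x _ => hlg x)]
    have hcont : Continuous fun x : ℝ => (x - c) ^ 2 / (2 * v) := by
      fun_prop
    rw [intervalIntegral.integral_sub intervalIntegrable_const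
      (hcont.intervalIntegrable _ _), intervalIntegral.integral_const,
      intervalIntegral.integral_div, hI2 m]
    simp
  have hgnn : ∀ x, 0 ≤ g x := fun x => gaussianPDFReal_nonneg c v.toNNReal x
  have hgpos : ∀ x, 0 < g x := fun x => gaussianPDFReal_pos c v.toNNReal x hvt0
  have hgcont : Continuous g := by
    rw [hg, gaussianPDFReal_def]
    fun_prop
  -- per-point key inequality
  have key : ∀ m ∈ T,
      q m * (-Real.log (Real.sqrt (2 * π * v)) - (((m : ℝ) - μ) ^ 2 + 1 / 12) / (2 * v))
        - q m * Real.log (q m)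
      ≤ (∫ x in (m : ℝ)..((m : ℝ) + 1), g x) - q m := by
    intro m _
    rcases (hq0 m).eq_or_lt with h0 | hpos
    · rw [← h0]
      simp only [zero_mul, sub_zero, zero_sub, neg_zero]
      exact intervalIntegral.integral_nonneg (by linarith) fun x _ => hgnn x
    · have hpt : ∀ x ∈ Set.Icc (m : ℝ) ((m : ℝ) + 1),
          q m * Real.log (g x) - q m * Real.log (q m) ≤ g x - q m := by
        intro x _
        have hlog := Real.log_le_sub_one_of_pos (div_pos (hgpos x) hpos)
        rw [Real.log_div (hgpos x).ne' hpos.ne'] at hlog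
        have h2 := mul_le_mul_of_nonneg_left hlog hpos.le
        have h3 : q m * (g x / q m - 1) = g x - q m := by
          field_simp
        nlinarith [h2, h3]
      have hcontL : Continuous fun x : ℝ =>
          q m * (-Real.log (Real.sqrt (2 * π * v)) - (x - c) ^ 2 / (2 * v))
            - q m * Real.log (q m) := by fun_prop
      have heqL : (fun x : ℝ => q m * Real.log (g x) - q m * Real.log (q m))
          = fun x : ℝ => q m * (-Real.log (Real.sqrt (2 * π * v)) - (x - c) ^ 2 / (2 * v))
            - q m * Real.log (q m) := funext fun x => by rw [hlg x]
      have hintL : IntervalIntegrable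
          (fun x : ℝ => q m * Real.log (g x) - q m * Real.log (q m)) volume (m : ℝ) ((m : ℝ) + 1) := by
        rw [heqL]; exact hcontL.intervalIntegrable _ _
      have hintR : IntervalIntegrable (fun x : ℝ => g x - q m) volume (m : ℝ) ((m : ℝ) + 1) :=
        (hgcont.sub continuous_const).intervalIntegrable _ _
      have hmono := intervalIntegral.integral_mono_on (by linarith) hintL hintR hpt
      have hint1 : IntervalIntegrable (fun u : ℝ => q m * Real.log (g u)) volume (m : ℝ) ((m : ℝ) + 1) := by
        have he : (fun u : ℝ => q m * Real.log (g u))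
            = fun u : ℝ => q m * (-Real.log (Real.sqrt (2 * π * v)) - (u - c) ^ 2 / (2 * v)) :=
          funext fun x => by rw [hlg x]
        rw [he]
        exact (by fun_prop : Continuous fun u : ℝ =>
          q m * (-Real.log (Real.sqrt (2 * π * v)) - (u - c) ^ 2 / (2 * v))).intervalIntegrable _ _
      rw [intervalIntegral.integral_sub hint1 intervalIntegrable_const,
        intervalIntegral.integral_sub (hgcont.intervalIntegrable _ _) intervalIntegrable_const,
        intervalIntegral.integral_const_mul, intervalIntegral.integral_const,
        intervalIntegral.integral_const, hIlog m] at hmono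
      simpa using hmono
  have hsum := Finset.sum_le_sum key
  -- bound the sum of gaussian integrals by 1
  have hGsum : ∑ m ∈ T, ∫ x in (m : ℝ)..((m : ℝ) + 1), g x ≤ 1 := by
    have hint : Integrable g := integrable_gaussianPDFReal c v.toNNReal
    calc ∑ m ∈ T, ∫ x in (m : ℝ)..((m : ℝ) + 1), g x
        = ∑ m ∈ T, ∫ x in Set.Ioc (m : ℝ) ((m : ℝ) + 1), g x :=
          Finset.sum_congr rfl fun m _ => intervalIntegral.integral_of_le (by linarith)
      _ = ∫ x in ⋃ m ∈ T, Set.Ioc (m : ℝ) ((m : ℝ) + 1), g x := by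
          refine (MeasureTheory.integral_biUnion_finset T (fun m _ => measurableSet_Ioc) ?_
            fun m _ => hint.integrableOn).symm
          intro a _ b _ hab
          simp only [Function.onFun]
          rw [Set.Ioc_disjoint_Ioc]
          rcases (by omega : a + 1 ≤ b ∨ b + 1 ≤ a) with h | h
          · refine le_trans (min_le_left _ _) (le_trans ?_ (le_max_right _ _))
            exact_mod_cast h
          · refine le_trans (min_le_right _ _) (le_trans ?_ (le_max_left _ _))
            exact_mod_cast h
      _ ≤ ∫ x, g x := setIntegral_le_integral hint (Filter.Eventually.of_forall hgnn)
      _ = 1 := integral_gaussianPDFReal_eq_one c hvt0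
  set L := Real.log (Real.sqrt (2 * π * v)) with hL
  have e1 : ∑ m ∈ T, (q m * (-L - (((m : ℝ) - μ) ^ 2 + 1 / 12) / (2 * v)) - q m * Real.log (q m))
      = -L - (σ2 + 1 / 12) / (2 * v) - ∑ m ∈ T, q m * Real.log (q m) := by
    have e2 : ∀ m ∈ T, q m * (-L - (((m : ℝ) - μ) ^ 2 + 1 / 12) / (2 * v)) - q m * Real.log (q m)
        = (-L - (1 / 12) / (2 * v)) * q m - (1 / (2 * v)) * (q m * ((m : ℝ) - μ) ^ 2)
          - q m * Real.log (q m) := by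
      intro m _
      field_simp
      ring
    rw [Finset.sum_congr rfl e2, Finset.sum_sub_distrib, Finset.sum_sub_distrib,
      ← Finset.mul_sum, ← Finset.mul_sum, hq1, ← hσ2']
    field_simp
    ring
  have e3 : ∑ m ∈ T, ((∫ x in (m : ℝ)..((m : ℝ) + 1), g x) - q m)
      = (∑ m ∈ T, ∫ x in (m : ℝ)..((m : ℝ) + 1), g x) - 1 := by
    rw [Finset.sum_sub_distrib, hq1]
  rw [e1, e3] at hsum
  have e4 : (σ2 + 1 / 12) / (2 * v) = 1 / 2 := by
    rw [← hv]
    field_simp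
  have e5 : L = Real.log (2 * π * v) / 2 := Real.log_sqrt h2πv.le
  have e6 : Real.log (2 * π * Real.exp 1 * v) = Real.log (2 * π * v) + 1 := by
    rw [show 2 * π * Real.exp 1 * v = 2 * π * v * Real.exp 1 by ring,
      Real.log_mul h2πv.ne' (Real.exp_ne_zero 1), Real.log_exp]
  rw [e6]
  linarith


/-- Lemma 8 of the paper: an integer-valued random vector `X = (X₁,…,Xₙ)` taking
finitely many values (given here by a probability mass function `p` supported on
the finite set `S ⊆ ℤⁿ`) has Shannon entropy (in bits) at most
`(n/2) log₂[2πe((1/n)∑ᵢ Var(Xᵢ) + 1/12)]`, where `Var(Xᵢ) = E(Xᵢ²) - (E Xᵢ)²`. -/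
theorem entropy_le_gaussian_bound (n : ℕ) (hn : 0 < n)
    (S : Finset (Fin n → ℤ)) (p : (Fin n → ℤ) → ℝ)
    (hp0 : ∀ x, 0 ≤ p x) (hp1 : ∑ x ∈ S, p x = 1) (hps : ∀ x ∉ S, p x = 0) :
    -∑ x ∈ S, p x * Real.logb 2 (p x) ≤
      (n / 2 : ℝ) * Real.logb 2 (2 * Real.pi * Real.exp 1 *
        ((1 / n) * ∑ i : Fin n,
            ((∑ x ∈ S, p x * ((x i : ℝ)) ^ 2) - (∑ x ∈ S, p x * (x i : ℝ)) ^ 2) +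
          1 / 12)) := by

  classical
  set Ti : Fin n → Finset ℤ := fun i => S.image (fun x => x i) with hTi
  set Q : Fin n → ℤ → ℝ := fun i m => ∑ x ∈ S with x i = m, p x with hQ
  have hmarg : ∀ (i : Fin n) (f : ℤ → ℝ),
      ∑ m ∈ Ti i, Q i m * f m = ∑ x ∈ S, p x * f (x i) := by
    intro i f
    calc ∑ m ∈ Ti i, Q i m * f m
        = ∑ m ∈ Ti i, ∑ x ∈ S with x i = m, p x * f (x i) := by
          refine Finset.sum_congr rfl fun m hm => ?_
          rw [hQ, Finset.sum_mul]
          exact Finset.sum_congr rfl fun x hx => by rw [(Finset.mem_filter.1 hx).2]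
      _ = ∑ x ∈ S, p x * f (x i) :=
          Finset.sum_fiberwise_of_maps_to (fun x hx => Finset.mem_image_of_mem _ hx) _
  have hQ0 : ∀ i m, 0 ≤ Q i m := fun i m => Finset.sum_nonneg fun x _ => hp0 x
  have hQ1 : ∀ i, ∑ m ∈ Ti i, Q i m = 1 := by
    intro i
    have h := hmarg i fun _ => 1
    simpa [hp1] using h
  have hQle : ∀ i, ∀ x ∈ S, p x ≤ Q i (x i) := by
    intro i x hx
    exact Finset.single_le_sum (fun y _ => hp0 y) (Finset.mem_filter.2 ⟨hx, rfl⟩)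
  -- Gibbs / subadditivity
  have key : ∀ x ∈ S, p x * Real.log (∏ i, Q i (x i)) - p x * Real.log (p x)
      ≤ (∏ i, Q i (x i)) - p x := by
    intro x hx
    rcases (hp0 x).eq_or_lt with h0 | hp
    · rw [← h0]
      simpa using Finset.prod_nonneg fun i (_ : i ∈ Finset.univ) => hQ0 i (x i)
    · have hQpos : ∀ i, 0 < Q i (x i) := fun i => lt_of_lt_of_le hp (hQle i x hx)
      have hPpos : 0 < ∏ i, Q i (x i) := Finset.prod_pos fun i _ => hQpos i
      have hlog := Real.log_le_sub_one_of_pos (div_pos hPpos hp)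
      rw [Real.log_div hPpos.ne' hp.ne'] at hlog
      have h2 := mul_le_mul_of_nonneg_left hlog hp.le
      have h3 : p x * ((∏ i, Q i (x i)) / p x - 1) = (∏ i, Q i (x i)) - p x := by
        field_simp
      nlinarith [h2, h3]
  have hsum := Finset.sum_le_sum key
  have eA : ∑ x ∈ S, (p x * Real.log (∏ i, Q i (x i)) - p x * Real.log (p x))
      = (∑ i, ∑ m ∈ Ti i, Q i m * Real.log (Q i m)) - ∑ x ∈ S, p x * Real.log (p x) := by
    rw [Finset.sum_sub_distrib]
    congr 1
    calc ∑ x ∈ S, p x * Real.log (∏ i, Q i (x i))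
        = ∑ x ∈ S, ∑ i, p x * Real.log (Q i (x i)) := by
          refine Finset.sum_congr rfl fun x hx => ?_
          rcases (hp0 x).eq_or_lt with h0 | hp
          · rw [← h0]; simp
          · have hQne : ∀ i, Q i (x i) ≠ 0 := fun i => (lt_of_lt_of_le hp (hQle i x hx)).ne'
            rw [Real.log_prod fun i _ => hQne i, Finset.mul_sum]
      _ = ∑ i, ∑ x ∈ S, p x * Real.log (Q i (x i)) := Finset.sum_comm
      _ = ∑ i, ∑ m ∈ Ti i, Q i m * Real.log (Q i m) :=
          Finset.sum_congr rfl fun i _ => (hmarg i fun m => Real.log (Q i m)).symm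
  have eB : ∑ x ∈ S, ((∏ i, Q i (x i)) - p x) ≤ 0 := by
    rw [Finset.sum_sub_distrib, hp1]
    have hsub : S ⊆ Fintype.piFinset Ti := fun x hx => by
      rw [Fintype.mem_piFinset]
      exact fun i => Finset.mem_image_of_mem _ hx
    have h1 : ∑ x ∈ S, ∏ i, Q i (x i) ≤ ∑ x ∈ Fintype.piFinset Ti, ∏ i, Q i (x i) :=
      Finset.sum_le_sum_of_subset_of_nonneg hsub fun x _ _ =>
        Finset.prod_nonneg fun i _ => hQ0 i (x i)
    have h2 : ∑ x ∈ Fintype.piFinset Ti, ∏ i, Q i (x i) = 1 := by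
      rw [← Finset.prod_univ_sum]
      simp [hQ1]
    linarith
  rw [eA] at hsum
  have hsubadd : -∑ x ∈ S, p x * Real.log (p x)
      ≤ ∑ i, -∑ m ∈ Ti i, Q i m * Real.log (Q i m) := by
    rw [Finset.sum_neg_distrib]
    linarith [eB, hsum]
  -- per-coordinate marginal statistics
  have hm2 : ∀ i, ∑ m ∈ Ti i, Q i m * (m : ℝ) = ∑ x ∈ S, p x * (x i : ℝ) := fun i =>
    hmarg i fun m => (m : ℝ)
  have hm3 : ∀ i, ∑ m ∈ Ti i, Q i m * ((m : ℝ)) ^ 2 = ∑ x ∈ S, p x * ((x i : ℝ)) ^ 2 := fun i =>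
    hmarg i fun m => (m : ℝ) ^ 2
  set V : Fin n → ℝ := fun i =>
    (∑ x ∈ S, p x * ((x i : ℝ)) ^ 2) - (∑ x ∈ S, p x * (x i : ℝ)) ^ 2 with hV
  have hVnn : ∀ i, 0 ≤ V i := by
    intro i
    rw [hV]
    simp only [← hm2 i, ← hm3 i]
    rw [var_nonneg_aux (Ti i) (Q i) (hQ0 i) (hQ1 i)]
    exact Finset.sum_nonneg fun m _ => mul_nonneg (hQ0 i m) (sq_nonneg _)
  have hone : ∀ i, -∑ m ∈ Ti i, Q i m * Real.log (Q i m)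
      ≤ (1 / 2) * Real.log (2 * π * Real.exp 1 * (V i + 1 / 12)) := by
    intro i
    have h := onedim_entropy_le (Ti i) (Q i) (hQ0 i) (hQ1 i)
    rwa [hm2 i, hm3 i] at h
  -- Jensen
  have hn' : (0 : ℝ) < n := by exact_mod_cast hn
  have hJ : ∑ i, (1 / 2) * Real.log (2 * π * Real.exp 1 * (V i + 1 / 12))
      ≤ (n / 2 : ℝ) * Real.log (2 * π * Real.exp 1 * ((1 / n) * ∑ i, V i + 1 / 12)) := by
    have hcc : ConcaveOn ℝ (Set.Ioi 0) Real.log := strictConcaveOn_log_Ioi.concaveOn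
    have hj := hcc.le_map_sum (t := Finset.univ) (w := fun _ : Fin n => 1 / (n : ℝ))
      (p := fun i => 2 * π * Real.exp 1 * (V i + 1 / 12))
      (fun i _ => by positivity)
      (by simp [Finset.sum_const, Finset.card_univ]; field_simp)
      (fun i _ => Set.mem_Ioi.2 (by have := hVnn i; positivity))
    have e8 : ∑ i, (1 / (n : ℝ)) • (2 * π * Real.exp 1 * (V i + 1 / 12))
        = 2 * π * Real.exp 1 * ((1 / n) * ∑ i, V i + 1 / 12) := by
      simp only [smul_eq_mul]
      rw [← Finset.mul_sum, ← Finset.mul_sum, Finset.sum_add_distrib, Finset.sum_const,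
        Finset.card_univ, Fintype.card_fin, nsmul_eq_mul]
      field_simp
    rw [e8] at hj
    have e9 : ∑ i, (1 / 2 : ℝ) * Real.log (2 * π * Real.exp 1 * (V i + 1 / 12))
        = (n / 2 : ℝ) * ∑ i, (1 / (n : ℝ)) • Real.log (2 * π * Real.exp 1 * (V i + 1 / 12)) := by
      simp only [smul_eq_mul]
      rw [← Finset.mul_sum, ← Finset.mul_sum]
      field_simp
      ring
    rw [e9]
    have := mul_le_mul_of_nonneg_left hj (by positivity : (0:ℝ) ≤ (n / 2 : ℝ))
    exact this
  -- convert to logb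
  have hlog2 : (0 : ℝ) < Real.log 2 := Real.log_pos one_lt_two
  have eL : -∑ x ∈ S, p x * Real.logb 2 (p x)
      = (-∑ x ∈ S, p x * Real.log (p x)) / Real.log 2 := by
    simp only [Real.logb, ← mul_div_assoc]
    rw [← Finset.sum_div, neg_div]
  rw [eL, Real.logb, ← mul_div_assoc]
  rw [div_le_div_iff_of_pos_right hlog2]
  calc -∑ x ∈ S, p x * Real.log (p x)
      ≤ ∑ i, -∑ m ∈ Ti i, Q i m * Real.log (Q i m) := hsubadd
    _ ≤ ∑ i, (1 / 2) * Real.log (2 * π * Real.exp 1 * (V i + 1 / 12)) :=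
        Finset.sum_le_sum fun i _ => hone i
    _ ≤ (n / 2 : ℝ) * Real.log (2 * π * Real.exp 1 * ((1 / n) * ∑ i, V i + 1 / 12)) := hJ
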